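/- For α ∈ (1/2,1) and t ∈ (0, t₀(α)], with Z_+^{(α)}(t) = (-(1-α)(1+αt) + √(Δ_t^{(α)}))/(2t) and Δ_t^{(α)} = (1-α)((1-α)(1+αt)² - 2αt) ≥ 0, the strict inequality Z_+^{(α)}(t) < -1/4 holds; consequently Z_-^{(α)}(t) ≤ Z_+^{(α)}(t) < -1/4. -/

import Mathlib

/-- For `α ∈ (1/2,1)` and `0 < t ≤ t₀(α)`, `Z_-^{(α)}(t) ≤ Z_+^{(α)}(t) < -1/4`. -/
theorem stmt_10 (α t : ℝ) (hα : α ∈ Set.Ioo (1/2 : ℝ) 1) (ht0 : 0 < t)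
    (ht : t ≤ (α - Real.sqrt (2*α - 1)) / (α*(1 - α))) :
    (let Δ : ℝ := (1 - α)*((1 - α)*(1 + α*t)^2 - 2*α*t);
     (-(1 - α)*(1 + α*t) + Real.sqrt Δ) / (2*t) < -(1:ℝ)/4 ∧
     (-(1 - α)*(1 + α*t) - Real.sqrt Δ) / (2*t)
       ≤ (-(1 - α)*(1 + α*t) + Real.sqrt Δ) / (2*t)) := by
  obtain ⟨hα1, hα2⟩ := hα
  set s := Real.sqrt (2*α - 1) with hsdef
  have hs0 : 0 ≤ s := Real.sqrt_nonneg _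
  have hs2 : s^2 = 2*α - 1 := Real.sq_sqrt (by linarith)
  have hden : 0 < α*(1-α) := by nlinarith
  have htb : t * (α*(1-α)) ≤ α - s := (le_div_iff₀ hden).mp ht
  have h1 : t * (α*(1-α)) * (α + s) ≤ (1-α)^2 := by
    nlinarith [mul_le_mul_of_nonneg_right htb (by linarith : (0:ℝ) ≤ α + s)]
  have h2 : t * (α*(α+s)) ≤ 1 - α := by
    have h1α : (0:ℝ) < 1 - α := by linarith
    have := (mul_le_mul_iff_of_pos_right h1α).mpr (le_refl (1-α))
    nlinarith [h1, mul_pos h1α h1α]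
  have hc : 0 < (1-α)*(1+α*t) - t/2 := by
    nlinarith [h2, mul_nonneg (mul_nonneg ht0.le (by linarith : (0:ℝ) ≤ α)) hs0,
      mul_pos ht0 (by linarith : (0:ℝ) < α - 1/2)]
  set Δ : ℝ := (1 - α)*((1 - α)*(1 + α*t)^2 - 2*α*t) with hΔ
  have hΔlt : Δ < ((1-α)*(1+α*t) - t/2)^2 := by
    nlinarith [mul_pos ht0 (mul_pos ht0 (by nlinarith : (0:ℝ) < (α-1/2)^2 + 1)),
      mul_pos ht0 (by nlinarith : (0:ℝ) < (1-α)*(2*α-1)),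
      mul_nonneg ht0.le (mul_nonneg ht0.le (sq_nonneg (α-1/2)))]
  have hsqrt : Real.sqrt Δ < (1-α)*(1+α*t) - t/2 := (Real.sqrt_lt' hc).mpr hΔlt
  refine ⟨?_, ?_⟩
  · rw [div_lt_iff₀ (by linarith : (0:ℝ) < 2*t)]
    linarith
  · have hΔ0 : 0 ≤ Real.sqrt Δ := Real.sqrt_nonneg _
    rw [div_le_div_iff₀ (by linarith : (0:ℝ) < 2*t) (by linarith : (0:ℝ) < 2*t)]
    nlinarith
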